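/- Let E be a real inner product space, let 0 < m ≤ L, and let f : E → ℝ be differentiable with stationary point x⋆ (∇f(x⋆) = 0) such that for all x ∈ E, (L + m)·⟨x − x⋆, ∇f(x)⟩ ≥ m·L·‖x − x⋆‖² + ‖∇f(x)‖² (i.e. f ∈ S(m,L)). If the sequence (x^k) satisfies the gradient descent iteration x^{k+1} = x^k − (2/(L + m))·∇f(x^k) for all k ≥ 0, then for all k ≥ 0, ‖x^k − x⋆‖ ≤ ((L − m)/(L + m))^k · ‖x^0 − x⋆‖. -/
import Mathlib


open RealInnerProductSpace

/-- For `f ∈ S(m,L)` with stationary point `x⋆`, gradient descent with stepsize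
`α = 2/(L+m)` converges linearly at rate `(L − m)/(L + m)`. -/
theorem gradient_descent_rate_optimal_stepsize
    {E : Type*} [NormedAddCommGroup E] [InnerProductSpace ℝ E] [CompleteSpace E]
    (m L : ℝ) (hm : 0 < m) (hmL : m ≤ L)
    (f : E → ℝ) (f' : E → E) (hf : ∀ x, HasGradientAt f (f' x) x)
    (xstar : E) (hstar : f' xstar = 0)
    (hsector : ∀ x : E,
      (L + m) * ⟪x - xstar, f' x⟫ ≥ m * L * ‖x - xstar‖ ^ 2 + ‖f' x‖ ^ 2)
    (x : ℕ → E) (hiter : ∀ k : ℕ, x (k + 1) = x k - (2 / (L + m)) • f' (x k)) :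
    ∀ k : ℕ, ‖x k - xstar‖ ≤ ((L - m) / (L + m)) ^ k * ‖x 0 - xstar‖ := by
  have hs : (0:ℝ) < L + m := by linarith
  have hρ0 : (0:ℝ) ≤ (L - m) / (L + m) := div_nonneg (by linarith) hs.le
  have step : ∀ k : ℕ, ‖x (k+1) - xstar‖ ≤ (L - m) / (L + m) * ‖x k - xstar‖ := by
    intro k
    set d := x k - xstar with hd
    set g := f' (x k) with hg
    have hsec := hsector (x k)
    have hrw : x (k+1) - xstar = d - (2/(L+m)) • g := by
      rw [hiter k, sub_right_comm]
    have hsq : ‖x (k+1) - xstar‖ ^ 2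
        = ‖d‖ ^ 2 - 2 * ((2/(L+m)) * ⟪d, g⟫) + (2/(L+m))^2 * ‖g‖ ^ 2 := by
      rw [hrw, norm_sub_sq_real, real_inner_smul_right, norm_smul,
        Real.norm_eq_abs, abs_of_pos (by positivity), mul_pow]
    have H : ((L+m) * ‖x (k+1) - xstar‖) ^ 2 ≤ ((L-m) * ‖d‖) ^ 2 := by
      have hsq' : ((L+m) * ‖x (k+1) - xstar‖) ^ 2
          = (L+m)^2 * ‖d‖^2 - 4*(L+m) * ⟪d, g⟫ + 4 * ‖g‖^2 := by
        rw [mul_pow, hsq]; field_simp; ring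
      rw [hsq']
      nlinarith [hsec]
    have key : (L+m) * ‖x (k+1) - xstar‖ ≤ (L-m) * ‖d‖ :=
      (pow_le_pow_iff_left₀ (by positivity) (mul_nonneg (by linarith) (norm_nonneg _)) two_ne_zero).mp H
    rw [div_mul_eq_mul_div, le_div_iff₀ hs]
    nlinarith [key]
  intro k
  induction k with
  | zero => simp
  | succ n ih =>
      calc ‖x (n+1) - xstar‖ ≤ (L - m) / (L + m) * ‖x n - xstar‖ := step n
        _ ≤ (L - m) / (L + m) * (((L - m) / (L + m)) ^ n * ‖x 0 - xstar‖) := by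
            exact mul_le_mul_of_nonneg_left ih hρ0
        _ = ((L - m) / (L + m)) ^ (n+1) * ‖x 0 - xstar‖ := by ring
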